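/- Define σ_m²(t) := 2 e^{-2μ∞ t} ∫_0^t e^{2μ∞ s} π^T (Λ - ϱ(s)M) D (Λ - ϱ(s)M) 1 ds with ϱ(s) = ϱ(1 - e^{-μ∞ s}), ϱ = λ∞/μ∞. Then σ_m²(t) = U·(1/μ∞)G_{0,2}(t) + Û·(ϱ/μ∞)(2G_{1,2}(t) - G_{0,2}(t)) + Ǔ·(ϱ²/μ∞)(G_{0,2}(t) - 4G_{1,2}(t) + 2μ∞ t e^{-2μ∞ t}), where G_{m,n}(t) := e^{-mμ∞ t} - e^{-nμ∞ t}, U := π^T Λ D Λ 1, Û := π^T M D Λ 1 + π^T Λ D M 1, Ǔ := π^T M D M 1. -/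
import Mathlib


open Matrix Real

private lemma vm_smul {d : ℕ} (x : Fin d → ℝ) (c : ℝ) (A : Matrix (Fin d) (Fin d) ℝ) :
    x ᵥ* (c • A) = c • (x ᵥ* A) := by
  ext j
  simp [Matrix.vecMul, dotProduct, Finset.mul_sum, mul_comm, mul_left_comm]

private lemma quad_expand {d : ℕ} (pv : Fin d → ℝ) (L M D : Matrix (Fin d) (Fin d) ℝ) (c : ℝ) :
    pv ᵥ* ((L - c • M) * D * (L - c • M)) ⬝ᵥ (fun _ => (1 : ℝ))
      = pv ᵥ* (L * D * L) ⬝ᵥ (fun _ => (1 : ℝ))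
        - c * (pv ᵥ* (M * D * L) ⬝ᵥ (fun _ => (1 : ℝ))
            + pv ᵥ* (L * D * M) ⬝ᵥ (fun _ => (1 : ℝ)))
        + c ^ 2 * (pv ᵥ* (M * D * M) ⬝ᵥ (fun _ => (1 : ℝ))) := by
  have hm : (L - c • M) * D * (L - c • M)
      = L * D * L - c • (M * D * L) - c • (L * D * M) + (c * c) • (M * D * M) := by
    rw [sub_mul, sub_mul, mul_sub, mul_sub]
    simp only [Matrix.smul_mul, Matrix.mul_smul, smul_smul]
    abel
  rw [hm]
  simp only [Matrix.vecMul_add, Matrix.vecMul_sub, vm_smul, add_dotProduct,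
    sub_dotProduct, smul_dotProduct, smul_eq_mul]
  ring

/-- Closed-form evaluation of the transient variance
`σ_m²(t) = 2 e^{-2μ∞t} ∫_0^t e^{2μ∞s} πᵀ(Λ - ϱ(s)M) D (Λ - ϱ(s)M) 1 ds`
in terms of `G_{m,n}(t) = e^{-mμ∞t} - e^{-nμ∞t}`, `U = πᵀΛDΛ1`,
`Û = πᵀMDΛ1 + πᵀΛDM1` and `Ǔ = πᵀMDM1`. -/
theorem transient_variance_closed_form (d : ℕ)
    (pv lam mu : Fin d → ℝ) (hmu : ∀ i, 0 < mu i)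
    (D : Matrix (Fin d) (Fin d) ℝ)
    (Lam Mm : Matrix (Fin d) (Fin d) ℝ)
    (hLam : Lam = Matrix.diagonal lam) (hMm : Mm = Matrix.diagonal mu)
    (laminf muinf : ℝ)
    (hlaminf : laminf = ∑ i, pv i * lam i) (hmuinf : muinf = ∑ i, pv i * mu i)
    (hmuinfpos : 0 < muinf)
    (ϱc : ℝ) (hϱc : ϱc = laminf / muinf)
    (ϱ : ℝ → ℝ) (hϱ : ∀ s, ϱ s = ϱc * (1 - Real.exp (-muinf * s)))
    (σm2 : ℝ → ℝ)
    (hσ : ∀ t, σm2 t = 2 * Real.exp (-2 * muinf * t)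
      * ∫ s in (0 : ℝ)..t, Real.exp (2 * muinf * s)
          * (pv ᵥ* ((Lam - ϱ s • Mm) * D * (Lam - ϱ s • Mm)) ⬝ᵥ (fun _ => (1 : ℝ))))
    (G : ℕ → ℕ → ℝ → ℝ)
    (hG : ∀ m n t, G m n t = Real.exp (-(m : ℝ) * muinf * t) - Real.exp (-(n : ℝ) * muinf * t))
    (U Uhat Ucheck : ℝ)
    (hU : U = pv ᵥ* (Lam * D * Lam) ⬝ᵥ (fun _ => (1 : ℝ)))
    (hUhat : Uhat = pv ᵥ* (Mm * D * Lam) ⬝ᵥ (fun _ => (1 : ℝ))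
      + pv ᵥ* (Lam * D * Mm) ⬝ᵥ (fun _ => (1 : ℝ)))
    (hUcheck : Ucheck = pv ᵥ* (Mm * D * Mm) ⬝ᵥ (fun _ => (1 : ℝ))) :
    ∀ t, 0 ≤ t →
      σm2 t = U * (1 / muinf) * G 0 2 t
        + Uhat * (ϱc / muinf) * (2 * G 1 2 t - G 0 2 t)
        + Ucheck * (ϱc ^ 2 / muinf)
            * (G 0 2 t - 4 * G 1 2 t + 2 * muinf * t * Real.exp (-2 * muinf * t)) := by
  intro t ht
  have hmne : muinf ≠ 0 := ne_of_gt hmuinfpos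
  -- the integrand in closed form
  set f : ℝ → ℝ := fun s =>
    U * Real.exp (2 * muinf * s)
      - ϱc * Uhat * (Real.exp (2 * muinf * s) - Real.exp (muinf * s))
      + ϱc ^ 2 * Ucheck * (Real.exp (2 * muinf * s) - 2 * Real.exp (muinf * s) + 1) with hf
  have hint_eq : ∀ s : ℝ,
      Real.exp (2 * muinf * s)
        * (pv ᵥ* ((Lam - ϱ s • Mm) * D * (Lam - ϱ s • Mm)) ⬝ᵥ (fun _ => (1 : ℝ))) = f s := by
    intro s
    rw [quad_expand, ← hU, ← hUhat, ← hUcheck, hϱ s]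
    simp only [hf]
    have hA : Real.exp (2 * muinf * s) = Real.exp (muinf * s) ^ 2 := by
      rw [sq, ← Real.exp_add]; ring_nf
    have hB : Real.exp (-muinf * s) = (Real.exp (muinf * s))⁻¹ := by
      rw [show -muinf * s = -(muinf * s) by ring, Real.exp_neg]
    rw [hA, hB]
    have hE0 : Real.exp (muinf * s) ≠ 0 := (Real.exp_pos _).ne'
    field_simp
    ring
  -- antiderivative
  set F : ℝ → ℝ := fun s =>
    U * (Real.exp (2 * muinf * s) / (2 * muinf))
      - ϱc * Uhat * (Real.exp (2 * muinf * s) / (2 * muinf) - Real.exp (muinf * s) / muinf)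
      + ϱc ^ 2 * Ucheck
          * (Real.exp (2 * muinf * s) / (2 * muinf) - 2 * (Real.exp (muinf * s) / muinf) + s)
    with hFdef
  have hF : ∀ s : ℝ, HasDerivAt F (f s) s := by
    intro s
    have h2 : HasDerivAt (fun x : ℝ => Real.exp (2 * muinf * x))
        (Real.exp (2 * muinf * s) * (2 * muinf)) s := by
      simpa using (((hasDerivAt_id s).const_mul (2 * muinf)).exp)
    have h1 : HasDerivAt (fun x : ℝ => Real.exp (muinf * x))
        (Real.exp (muinf * s) * muinf) s := by
      simpa using (((hasDerivAt_id s).const_mul muinf).exp)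
    have hd : HasDerivAt F
        (U * (Real.exp (2 * muinf * s) * (2 * muinf) / (2 * muinf))
          - ϱc * Uhat * (Real.exp (2 * muinf * s) * (2 * muinf) / (2 * muinf)
              - Real.exp (muinf * s) * muinf / muinf)
          + ϱc ^ 2 * Ucheck * (Real.exp (2 * muinf * s) * (2 * muinf) / (2 * muinf)
              - 2 * (Real.exp (muinf * s) * muinf / muinf) + 1)) s := by
      exact (((h2.div_const (2 * muinf)).const_mul U).sub
        (((h2.div_const (2 * muinf)).sub (h1.div_const muinf)).const_mul (ϱc * Uhat))).add
        ((((h2.div_const (2 * muinf)).sub ((h1.div_const muinf).const_mul 2)).add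
          (hasDerivAt_id s)).const_mul (ϱc ^ 2 * Ucheck))
    convert hd using 1
    simp only [hf]
    field_simp
  have hcont : Continuous f := by
    rw [hf]; fun_prop
  have hintegral : (∫ s in (0 : ℝ)..t, f s) = F t - F 0 :=
    intervalIntegral.integral_eq_sub_of_hasDerivAt (fun s _ => hF s)
      (hcont.intervalIntegrable 0 t)
  have hσt : σm2 t = 2 * Real.exp (-2 * muinf * t) * (F t - F 0) := by
    rw [hσ t, ← hintegral]
    congr 1
    exact intervalIntegral.integral_congr (fun s _ => hint_eq s)
  rw [hσt, hG, hG, hFdef]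
  simp only [Nat.cast_ofNat, Nat.cast_one, Nat.cast_zero]
  have hE0 : Real.exp (muinf * t) ≠ 0 := (Real.exp_pos _).ne'
  have hA : Real.exp (2 * muinf * t) = Real.exp (muinf * t) ^ 2 := by
    rw [sq, ← Real.exp_add]; ring_nf
  have hB : Real.exp (-muinf * t) = (Real.exp (muinf * t))⁻¹ := by
    rw [show -muinf * t = -(muinf * t) by ring, Real.exp_neg]
  have hC : Real.exp (-2 * muinf * t) = (Real.exp (muinf * t) ^ 2)⁻¹ := by
    rw [show -2 * muinf * t = -(2 * muinf * t) by ring, Real.exp_neg, hA]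
  have hE3 : Real.exp (-(0 : ℝ) * muinf * t) = 1 := by norm_num
  have hE4 : Real.exp (-(1 : ℝ) * muinf * t) = (Real.exp (muinf * t))⁻¹ := by
    rw [show -(1 : ℝ) * muinf * t = -muinf * t by ring, hB]
  have hE5 : Real.exp (-(2 : ℝ) * muinf * t) = (Real.exp (muinf * t) ^ 2)⁻¹ := by
    rw [show -(2 : ℝ) * muinf * t = -2 * muinf * t by ring, hC]
  have h0 : Real.exp (2 * muinf * 0) = 1 := by norm_num
  have h0' : Real.exp (muinf * 0) = 1 := by norm_num
  rw [hE3, hE4, hE5, hA, h0, h0']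
  field_simp
  ring
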